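/- Let λ ∈ ℂ with |λ| = 1, λ not a root of unity and λ² ≠ 1; let φ be normalized and symmetric; let q* ∈ ℂ[[t]] with q*(t) = 1 + q₂*t² + ... and s₀ = (1+2q₂*)/4 ≠ 0. With h, ψ as in the construction and w = φ_z·E( ψ/h − Π(ψ/h) ), one has ∇⁺( h·∇(w/φ_z) ) + ℰ(q*,φ)·φ_z = [ z·∂_z(S_{q*}(φ⁻,φ)) ]/z − ∇⁺( h·Π(ψ/h) ). -/

import Mathlib

/- Common setup: formal power series in two commuting variables `z, z̄` over `ℂ`,
represented by their coefficient functions, together with the operators of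
Treschev's linearizable billiard construction. -/

open scoped BigOperators

noncomputable section

namespace Treschev

/-- A formal power series `f = Σ_{j,k≥0} f_{j,k} z^j z̄^k`, given by its coefficients. -/
abbrev FPS : Type := ℕ → ℕ → ℂ

/-- A formal power series in one variable `t`, given by its coefficients. -/
abbrev OPS : Type := ℕ → ℂ

/-- Product of two formal power series (Cauchy product). -/
def fmul (f g : FPS) : FPS := fun j k =>
  ∑ a ∈ Finset.range (j + 1), ∑ b ∈ Finset.range (k + 1), f a b * g (j - a) (k - b)

/-- The constant series `1`. -/
def oneF : FPS := fun j k => if j = 0 ∧ k = 0 then 1 else 0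

/-- Powers of a formal power series. -/
def fpow (f : FPS) : ℕ → FPS
  | 0 => oneF
  | n + 1 => fmul f (fpow f n)

/-- Substitution of a two-variable series `u` with zero constant term into a
one-variable series `q` (the formula is the correct one whenever `u 0 0 = 0`). -/
def substOne (q : OPS) (u : FPS) : FPS := fun j k =>
  ∑ m ∈ Finset.range (j + k + 1), q m * fpow u m j k

/-- Substitution `F(u, v)` of two series with zero constant term into a two-variable
series `F` (the formula is the correct one whenever `u 0 0 = 0` and `v 0 0 = 0`). -/
def subst2 (F : FPS) (u v : FPS) : FPS := fun j k =>
  ∑ m ∈ Finset.range (j + k + 1), ∑ n ∈ Finset.range (j + k + 1),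
    F m n * fmul (fpow u m) (fpow v n) j k

/-- The Taylor series of `cos`. -/
def cosSeries : OPS := fun n => if n % 2 = 0 then (-1 : ℂ) ^ (n / 2) / (n.factorial : ℂ) else 0

/-- `(t₁ + t₂)/2` as a two-variable series. -/
def halfSum : FPS := fun j k =>
  if j = 1 ∧ k = 0 then (1 / 2 : ℂ) else if j = 0 ∧ k = 1 then (1 / 2 : ℂ) else 0

/-- `(t₁ − t₂)/2` as a two-variable series. -/
def halfDiff : FPS := fun j k =>
  if j = 1 ∧ k = 0 then (1 / 2 : ℂ) else if j = 0 ∧ k = 1 then (-(1 / 2) : ℂ) else 0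

/-- The generating function `S_q(t₁,t₂) = q((t₁+t₂)/2)·cos((t₁−t₂)/2)` as a
formal power series in `t₁, t₂`. -/
def Sq (q : OPS) : FPS := fmul (substOne q halfSum) (substOne cosSeries halfDiff)

/-- Formal partial derivative with respect to the first variable. -/
def d1 (f : FPS) : FPS := fun j k => ((j + 1 : ℕ) : ℂ) * f (j + 1) k

/-- Formal partial derivative with respect to the second variable. -/
def d2 (f : FPS) : FPS := fun j k => ((k + 1 : ℕ) : ℂ) * f j (k + 1)

/-- `f⁺`, with `(f⁺)_{j,k} = λ^{j−k} f_{j,k}`. -/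
def plus (l : ℂ) (f : FPS) : FPS := fun j k => l ^ ((j : ℤ) - (k : ℤ)) * f j k

/-- `f⁻`, with `(f⁻)_{j,k} = λ^{k−j} f_{j,k}`. -/
def minus (l : ℂ) (f : FPS) : FPS := fun j k => l ^ ((k : ℤ) - (j : ℤ)) * f j k

/-- `∇f = f⁻ − λ⁻¹ f`. -/
def nab (l : ℂ) (f : FPS) : FPS := minus l f - l⁻¹ • f

/-- `∇⁺f = f − λ f⁺`. -/
def nabPlus (l : ℂ) (f : FPS) : FPS := f - l • plus l f

/-- The average `[f] = Σ_j f_{j,j} (z z̄)^j`. -/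
def avg (f : FPS) : FPS := fun j k => if j = k then f j k else 0

/-- The projection `Π₊(f) = [z f]/z`. -/
def Pip (f : FPS) : FPS := fun j k => if k = j + 1 then f j k else 0

/-- The projection `Π(f) = [z̄ f]/z̄`. -/
def Pim (f : FPS) : FPS := fun j k => if j = k + 1 then f j k else 0

/-- `E⁺`, the partial inverse of `∇⁺`. -/
def Eplus (l : ℂ) (f : FPS) : FPS := fun j k =>
  if k = j + 1 then 0 else f j k / (1 - l ^ ((j : ℤ) - (k : ℤ) + 1))

/-- `E`, the partial inverse of `∇`. -/
def Emin (l : ℂ) (f : FPS) : FPS := fun j k =>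
  if j = k + 1 then 0 else f j k / (l ^ ((k : ℤ) - (j : ℤ)) - l⁻¹)

/-- `Ẽ`, with `Ẽ(f − f⁺) = f − [f]`. -/
def Etilde (l : ℂ) (f : FPS) : FPS := fun j k =>
  if j = k then 0 else f j k / (1 - l ^ ((j : ℤ) - (k : ℤ)))

/-- `f ∘ I`, where `I(z,z̄) = (z̄,z)`. -/
def swapI (f : FPS) : FPS := fun j k => f k j

/-- Multiplication by `z`. -/
def mulz (f : FPS) : FPS := fun j k => if j = 0 then 0 else f (j - 1) k

/-- Multiplication by `z̄`. -/
def mulzbar (f : FPS) : FPS := fun j k => if k = 0 then 0 else f j (k - 1)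

/-- Division by `z` (valid on series divisible by `z`). -/
def divz (f : FPS) : FPS := fun j k => f (j + 1) k

/-- Multiplicative inverse `1/h` (the geometric-series formula, which is the correct
inverse whenever `h 0 0 ≠ 0`). -/
def finv (h : FPS) : FPS := fun j k =>
  (h 0 0)⁻¹ * ∑ m ∈ Finset.range (j + k + 1),
    fpow (fun a b => if a = 0 ∧ b = 0 then 0 else -(h a b) * (h 0 0)⁻¹) m j k

/-- Quotient `f/h` of formal power series. -/
def fdiv (f h : FPS) : FPS := fmul f (finv h)

/-- `ℰ(q,φ) = ∂₂S_q(φ⁻,φ) + ∂₁S_q(φ,φ⁺)`. -/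
def Err (l : ℂ) (q : OPS) (φ : FPS) : FPS :=
  subst2 (d2 (Sq q)) (minus l φ) φ + subst2 (d1 (Sq q)) φ (plus l φ)

/-- `∂_φℰ(q,φ)(w) = ∂₁₂S_q(φ⁻,φ)w⁻ + ∂₂₂S_q(φ⁻,φ)w + ∂₁₁S_q(φ,φ⁺)w + ∂₁₂S_q(φ,φ⁺)w⁺`. -/
def dErr (l : ℂ) (q : OPS) (φ : FPS) (w : FPS) : FPS :=
  fmul (subst2 (d1 (d2 (Sq q))) (minus l φ) φ) (minus l w)
    + fmul (subst2 (d2 (d2 (Sq q))) (minus l φ) φ) w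
    + fmul (subst2 (d1 (d1 (Sq q))) φ (plus l φ)) w
    + fmul (subst2 (d1 (d2 (Sq q))) φ (plus l φ)) (plus l w)

/-- `h = ∂₁₂S_q(φ⁻,φ)·φ_z·φ_z⁻`. -/
def hFun (l : ℂ) (q : OPS) (φ : FPS) : FPS :=
  fmul (fmul (subst2 (d1 (d2 (Sq q))) (minus l φ) φ) (d1 φ)) (minus l (d1 φ))

/-- `ψ = −E⁺( ℰ(q,φ)·φ_z − Π₊(ℰ(q,φ)·φ_z) )`. -/
def psiFun (l : ℂ) (q : OPS) (φ : FPS) : FPS :=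
  -Eplus l (fmul (Err l q φ) (d1 φ) - Pip (fmul (Err l q φ) (d1 φ)))

/-- `w = φ_z·E( ψ/h − Π(ψ/h) )`. -/
def wFun (l : ℂ) (q : OPS) (φ : FPS) : FPS :=
  fmul (d1 φ)
    (Emin l (fdiv (psiFun l q φ) (hFun l q φ) - Pim (fdiv (psiFun l q φ) (hFun l q φ))))

/-- `κ = ∂₁₂S_q(φ⁻,φ)·(λ⁻¹ φ_z⁻ φ_z̄ − λ φ_z̄⁻ φ_z)`. -/
def kappaFun (l : ℂ) (q : OPS) (φ : FPS) : FPS :=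
  fmul (subst2 (d1 (d2 (Sq q))) (minus l φ) φ)
    (l⁻¹ • fmul (minus l (d1 φ)) (d2 φ) - l • fmul (minus l (d2 φ)) (d1 φ))

/-- `g = φ_z̄ / φ_z`. -/
def gFun (φ : FPS) : FPS := fdiv (d2 φ) (d1 φ)

/-- `R₁ = ( −[z̄·ℰ·φ_z̄] + [z̄·g·[z·ℰ·φ_z]/z] ) / ( λ·z·[κ] )`. -/
def R1Fun (l : ℂ) (q : OPS) (φ : FPS) : FPS :=
  l⁻¹ • fmul (finv (avg (kappaFun l q φ)))
    (divz (-avg (mulzbar (fmul (Err l q φ) (d2 φ)))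
      + avg (mulzbar (fmul (gFun φ) (divz (avg (mulz (fmul (Err l q φ) (d1 φ)))))))))

/-- `R₂ = (1/z)·[ z̄·ψ·(λ⁻¹g − λg⁻)·([κ]−κ)/(κ·[κ]) ]`. -/
def R2Fun (l : ℂ) (q : OPS) (φ : FPS) : FPS :=
  divz (avg (mulzbar
    (fmul (fmul (psiFun l q φ) (l⁻¹ • gFun φ - l • minus l (gFun φ)))
      (fmul (avg (kappaFun l q φ) - kappaFun l q φ)
        (finv (fmul (kappaFun l q φ) (avg (kappaFun l q φ))))))))

/-- `R₃ = [z·∂_z(S_q(φ⁻,φ))]/z − ∇⁺( h·Π(ψ/h) )`. -/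
def R3Fun (l : ℂ) (q : OPS) (φ : FPS) : FPS :=
  Pip (d1 (subst2 (Sq q) (minus l φ) φ))
    - nabPlus l (fmul (hFun l q φ) (Pim (fdiv (psiFun l q φ) (hFun l q φ))))

/-- `R₄ = ∂_z(ℰ(q,φ))·(w/φ_z) + R₃/φ_z`. -/
def R4Fun (l : ℂ) (q : OPS) (φ : FPS) : FPS :=
  fmul (d1 (Err l q φ)) (fdiv (wFun l q φ) (d1 φ)) + fdiv (R3Fun l q φ) (d1 φ)

/-- `φ = z + z̄ + O₃`. -/
def normalized (φ : FPS) : Prop :=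
  φ 0 0 = 0 ∧ φ 1 0 = 1 ∧ φ 0 1 = 1 ∧ φ 2 0 = 0 ∧ φ 1 1 = 0 ∧ φ 0 2 = 0

/-- The weighted norm `‖f‖_ρ = Σ_{j,k} |f_{j,k}| ρ^{j+k} ∈ [0,∞]`. -/
def wnorm (ρ : ℝ) (f : FPS) : ENNReal :=
  ∑' p : ℕ × ℕ, ENNReal.ofReal (‖f p.1 p.2‖ * ρ ^ (p.1 + p.2))

/-- `D(f) = Σ_{n≥1} n f_n (z z̄)^n` for a series in `z z̄`. -/
def Dop (f : FPS) : FPS := fun j k => if j = k then (j : ℂ) * f j k else 0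

/-- `D̄(f − f₀) = Σ_{n≥1} (f_n/n) (z z̄)^n` for a series in `z z̄`. -/
def Dbar (f : FPS) : FPS := fun j k => if j = k ∧ j ≠ 0 then f j k / (j : ℂ) else 0

/-- The constant part `f₀` of a series. -/
def constPart (f : FPS) : FPS := fun j k => if j = 0 ∧ k = 0 then f 0 0 else 0

/-- `ξ₀ = ((λ⁻¹+1)z + (λ+1)z̄)/2`. -/
def xi0 (l : ℂ) : FPS := fun a b =>
  if a = 1 ∧ b = 0 then (l⁻¹ + 1) / 2 else if a = 0 ∧ b = 1 then (l + 1) / 2 else 0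

/-! ### Auxiliary infrastructure -/

/-- Bridge to iterated power series. -/
def toPS (f : FPS) : PowerSeries (PowerSeries ℂ) :=
  PowerSeries.mk fun j => PowerSeries.mk (f j)

lemma coeff_toPS (f : FPS) (j k : ℕ) :
    PowerSeries.coeff k (PowerSeries.coeff j (toPS f)) = f j k := by
  simp [toPS]

lemma toPS_injective : Function.Injective toPS := by
  intro f g h
  funext j k
  rw [← coeff_toPS f j k, ← coeff_toPS g j k, h]

lemma toPS_mul (f g : FPS) : toPS (fmul f g) = toPS f * toPS g := by
  refine PowerSeries.ext fun j => PowerSeries.ext fun k => ?_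
  rw [coeff_toPS, PowerSeries.coeff_mul, fmul]
  rw [Finset.Nat.sum_antidiagonal_eq_sum_range_succ_mk]
  rw [map_sum]
  refine Finset.sum_congr rfl fun a _ => ?_
  rw [PowerSeries.coeff_mul, Finset.Nat.sum_antidiagonal_eq_sum_range_succ_mk]
  refine Finset.sum_congr rfl fun b _ => ?_
  simp [toPS]

lemma toPS_one : toPS oneF = 1 := by
  refine PowerSeries.ext fun j => PowerSeries.ext fun k => ?_
  rw [coeff_toPS]
  rcases Nat.eq_zero_or_pos j with rfl | hj
  · rcases Nat.eq_zero_or_pos k with rfl | hk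
    · simp [oneF]
    · simp [oneF, PowerSeries.coeff_one, Nat.pos_iff_ne_zero.mp hk]
  · simp [oneF, PowerSeries.coeff_one, Nat.pos_iff_ne_zero.mp hj]

lemma toPS_add (f g : FPS) : toPS (f + g) = toPS f + toPS g := by
  refine PowerSeries.ext fun j => PowerSeries.ext fun k => ?_
  simp [toPS]

lemma toPS_d1 (f : FPS) : toPS (d1 f) = PowerSeries.derivativeFun (toPS f) := by
  refine PowerSeries.ext fun j => PowerSeries.ext fun k => ?_
  rw [coeff_toPS]
  change _ = PowerSeries.coeff k (PowerSeries.coeff j (PowerSeries.derivative _ (toPS f)))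
  rw [PowerSeries.coeff_derivative,
    show ((j : PowerSeries ℂ) + 1) = PowerSeries.C ((j : ℂ) + 1) by simp,
    PowerSeries.coeff_mul_C]
  simp [toPS, d1, mul_comm]

lemma fmul_comm (f g : FPS) : fmul f g = fmul g f := by
  apply toPS_injective
  rw [toPS_mul, toPS_mul, mul_comm]

lemma fmul_assoc (f g h : FPS) : fmul (fmul f g) h = fmul f (fmul g h) := by
  apply toPS_injective
  rw [toPS_mul, toPS_mul, toPS_mul, toPS_mul, mul_assoc]

lemma fmul_oneF (f : FPS) : fmul f oneF = f := by
  apply toPS_injective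
  rw [toPS_mul, toPS_one, mul_one]

lemma oneF_fmul (f : FPS) : fmul oneF f = f := by
  rw [fmul_comm, fmul_oneF]

lemma d1_fmul (f g : FPS) : d1 (fmul f g) = fmul (d1 f) g + fmul f (d1 g) := by
  apply toPS_injective
  rw [toPS_add, toPS_d1, toPS_mul, toPS_mul, toPS_mul, toPS_d1, toPS_d1,
    PowerSeries.derivativeFun_mul]
  simp only [smul_eq_mul]
  ring

lemma fmul_add (f g h : FPS) : fmul f (g + h) = fmul f g + fmul f h := by
  apply toPS_injective
  rw [toPS_add, toPS_mul, toPS_mul, toPS_mul, toPS_add, mul_add]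

lemma add_fmul (f g h : FPS) : fmul (f + g) h = fmul f h + fmul g h := by
  rw [fmul_comm, fmul_add, fmul_comm h f, fmul_comm h g]

lemma fmul_smul (c : ℂ) (f g : FPS) : fmul f (c • g) = c • fmul f g := by
  funext j k
  simp only [fmul, Pi.smul_apply, smul_eq_mul, Finset.mul_sum]
  refine Finset.sum_congr rfl fun a _ => Finset.sum_congr rfl fun b _ => by ring

lemma smul_fmul (c : ℂ) (f g : FPS) : fmul (c • f) g = c • fmul f g := by
  rw [fmul_comm, fmul_smul, fmul_comm]

lemma fmul_sub (f g h : FPS) : fmul f (g - h) = fmul f g - fmul f h := by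
  funext j k
  simp only [fmul, Pi.sub_apply, ← Finset.sum_sub_distrib]
  refine Finset.sum_congr rfl fun a _ => Finset.sum_congr rfl fun b _ => ?_
  ring

lemma sub_fmul (f g h : FPS) : fmul (f - g) h = fmul f h - fmul g h := by
  rw [fmul_comm, fmul_sub, fmul_comm h f, fmul_comm h g]

lemma d1_oneF : d1 oneF = 0 := by
  funext j k
  simp [d1, oneF]

/-! ### Order of vanishing -/

def ordGE (f : FPS) (m : ℕ) : Prop := ∀ a b, a + b < m → f a b = 0

lemma ordGE_fmul_left {f : FPS} {m : ℕ} (hf : ordGE f m) (g : FPS) :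
    ordGE (fmul f g) m := by
  intro j k hjk
  rw [fmul]
  refine Finset.sum_eq_zero fun a ha => Finset.sum_eq_zero fun b hb => ?_
  rw [Finset.mem_range] at ha hb
  rw [hf a b (by omega), zero_mul]

lemma ordGE_fmul {f g : FPS} {m n : ℕ} (hf : ordGE f m) (hg : ordGE g n) :
    ordGE (fmul f g) (m + n) := by
  intro j k hjk
  rw [fmul]
  refine Finset.sum_eq_zero fun a ha => Finset.sum_eq_zero fun b hb => ?_
  rw [Finset.mem_range] at ha hb
  by_cases hab : a + b < m
  · rw [hf a b hab, zero_mul]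
  · rw [hg (j - a) (k - b) (by omega), mul_zero]

lemma ordGE_fpow {u : FPS} (hu : u 0 0 = 0) (m : ℕ) : ordGE (fpow u m) m := by
  induction m with
  | zero => intro a b h; omega
  | succ m ih =>
      have hu1 : ordGE u 1 := by
        intro a b h
        have : a = 0 ∧ b = 0 := by omega
        rw [this.1, this.2, hu]
      have := ordGE_fmul hu1 ih
      rwa [Nat.add_comm 1 m] at this

/-! ### The multiplicative inverse -/

lemma fmul_finv {h : FPS} (h0 : h 0 0 ≠ 0) : fmul h (finv h) = oneF := by
  set r : FPS := fun a b => if a = 0 ∧ b = 0 then 0 else -(h a b) * (h 0 0)⁻¹ with hr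
  have hr00 : r 0 0 = 0 := by simp [hr]
  set G : FPS := (fun j k => ∑ m ∈ Finset.range (j + k + 1), fpow r m j k : FPS) with hG
  have hstab : ∀ j k N, j + k + 1 ≤ N →
      G j k = ∑ m ∈ Finset.range N, fpow r m j k := by
    intro j k N hN
    rw [hG]
    refine Finset.sum_subset (Finset.range_subset_range.mpr hN) fun m _ hm => ?_
    rw [Finset.mem_range] at hm
    exact ordGE_fpow hr00 m j k (by omega)
  have hfinv : finv h = (h 0 0)⁻¹ • G := by
    funext j k
    simp only [finv, hG, hr, Pi.smul_apply, smul_eq_mul]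
  have key : fmul r G = G - oneF := by
    funext j k
    have step1 : fmul r G j k
        = ∑ m ∈ Finset.range (j + k + 1), fmul r (fpow r m) j k := by
      have e1 : fmul r G j k = ∑ a ∈ Finset.range (j + 1), ∑ b ∈ Finset.range (k + 1),
          ∑ m ∈ Finset.range (j + k + 1), r a b * fpow r m (j - a) (k - b) := by
        rw [fmul]
        refine Finset.sum_congr rfl fun a ha => Finset.sum_congr rfl fun b hb => ?_
        rw [Finset.mem_range] at ha hb
        rw [hstab (j - a) (k - b) (j + k + 1) (by omega), Finset.mul_sum]
      have e2 : (∑ a ∈ Finset.range (j + 1), ∑ b ∈ Finset.range (k + 1),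
          ∑ m ∈ Finset.range (j + k + 1), r a b * fpow r m (j - a) (k - b))
          = ∑ m ∈ Finset.range (j + k + 1), ∑ a ∈ Finset.range (j + 1),
            ∑ b ∈ Finset.range (k + 1), r a b * fpow r m (j - a) (k - b) := by
        rw [show (∑ a ∈ Finset.range (j + 1), ∑ b ∈ Finset.range (k + 1),
          ∑ m ∈ Finset.range (j + k + 1), r a b * fpow r m (j - a) (k - b))
          = ∑ a ∈ Finset.range (j + 1), ∑ m ∈ Finset.range (j + k + 1),
            ∑ b ∈ Finset.range (k + 1), r a b * fpow r m (j - a) (k - b) from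
          Finset.sum_congr rfl fun a _ => Finset.sum_comm]
        exact Finset.sum_comm
      rw [e1, e2]
      rfl
    have step2 : ∀ m, fmul r (fpow r m) = fpow r (m + 1) := fun m => rfl
    simp only [step1, step2]
    have e3 : ∑ m ∈ Finset.range (j + k + 1), fpow r (m + 1) j k
        = (∑ m ∈ Finset.range (j + k + 2), fpow r m j k) - fpow r 0 j k := by
      rw [Finset.sum_range_succ' (fun m => fpow r m j k) (j + k + 1)]
      ring
    rw [e3, ← hstab j k (j + k + 2) (by omega)]
    rfl
  have hh : h = (h 0 0) • (oneF - r) := by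
    funext a b
    by_cases hab : a = 0 ∧ b = 0
    · rw [hab.1, hab.2]
      simp [oneF, hr]
    · simp only [Pi.smul_apply, Pi.sub_apply, smul_eq_mul, oneF, hr, if_neg hab]
      field_simp
      ring
  calc fmul h (finv h) = fmul ((h 0 0) • (oneF - r)) ((h 0 0)⁻¹ • G) := by rw [← hh, ← hfinv]
    _ = (h 0 0)⁻¹ • ((h 0 0) • fmul (oneF - r) G) := by rw [fmul_smul, smul_fmul]
    _ = fmul (oneF - r) G := by
        rw [smul_smul, inv_mul_cancel₀ h0, one_smul]
    _ = G - (G - oneF) := by rw [sub_fmul, oneF_fmul, key]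
    _ = oneF := by abel

lemma fmul_fdiv_cancel {h : FPS} (h0 : h 0 0 ≠ 0) (f : FPS) : fmul h (fdiv f h) = f := by
  rw [fdiv, ← fmul_assoc, fmul_comm h f, fmul_assoc, fmul_finv h0, fmul_oneF]

lemma fdiv_fmul_cancel {a : FPS} (a0 : a 0 0 ≠ 0) (f : FPS) : fdiv (fmul a f) a = f := by
  rw [fdiv, fmul_assoc, fmul_comm f, ← fmul_assoc, fmul_finv a0, oneF_fmul]

lemma zero_fmul (g : FPS) : fmul 0 g = 0 := by
  funext j k
  simp [fmul]

lemma fmul_zero (f : FPS) : fmul f 0 = 0 := by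
  funext j k
  simp [fmul]

lemma fmul_right_comm (a b c : FPS) : fmul (fmul a b) c = fmul (fmul a c) b := by
  rw [fmul_assoc, fmul_assoc, fmul_comm b c]

lemma d1_fpow (u : FPS) (m : ℕ) :
    d1 (fpow u (m + 1)) = ((m + 1 : ℕ) : ℂ) • fmul (fpow u m) (d1 u) := by
  induction m with
  | zero =>
      show d1 (fmul u oneF) = _
      rw [d1_fmul, d1_oneF, fmul_oneF, fmul_zero, add_zero]
      show d1 u = ((1 : ℕ) : ℂ) • fmul oneF (d1 u)
      rw [oneF_fmul]
      norm_num
  | succ m ih =>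
      show d1 (fmul u (fpow u (m + 1))) = _
      rw [d1_fmul, ih, fmul_smul, ← fmul_assoc]
      have : fmul (d1 u) (fpow u (m + 1)) = fmul (fpow u (m + 1)) (d1 u) := fmul_comm _ _
      rw [this]
      show _ = ((m + 2 : ℕ) : ℂ) • fmul (fpow u (m + 1)) (d1 u)
      rw [show ((m + 2 : ℕ) : ℂ) = 1 + ((m + 1 : ℕ) : ℂ) by push_cast; ring, add_smul, one_smul]
      rfl

lemma subst2_stab (F : FPS) {u v : FPS} (hu : u 0 0 = 0) (hv : v 0 0 = 0)
    (j k N : ℕ) (hN : j + k + 1 ≤ N) :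
    subst2 F u v j k = ∑ m ∈ Finset.range N, ∑ n ∈ Finset.range N,
      F m n * fmul (fpow u m) (fpow v n) j k := by
  have hzero : ∀ m n : ℕ, j + k < m + n → fmul (fpow u m) (fpow v n) j k = 0 :=
    fun m n h => ordGE_fmul (ordGE_fpow hu m) (ordGE_fpow hv n) j k (by omega)
  rw [subst2]
  have step1 : ∀ m ∈ Finset.range (j + k + 1),
      (∑ n ∈ Finset.range (j + k + 1), F m n * fmul (fpow u m) (fpow v n) j k)
      = ∑ n ∈ Finset.range N, F m n * fmul (fpow u m) (fpow v n) j k := by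
    intro m _
    refine Finset.sum_subset (Finset.range_subset_range.mpr hN) fun n _ hn => ?_
    rw [Finset.mem_range] at hn
    rw [hzero m n (by omega), mul_zero]
  rw [Finset.sum_congr rfl step1]
  refine Finset.sum_subset (Finset.range_subset_range.mpr hN) fun m _ hm => ?_
  rw [Finset.mem_range] at hm
  refine Finset.sum_eq_zero fun n _ => ?_
  rw [hzero m n (by omega), mul_zero]

lemma fmul_sum_left {s : Finset (ℕ × ℕ)} {c : ℕ × ℕ → ℂ} {p : ℕ × ℕ → FPS}
    {f : FPS} (w : FPS) {j k : ℕ}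
    (hf : ∀ a b, a ≤ j → b ≤ k → f a b = ∑ i ∈ s, c i * p i a b) :
    fmul f w j k = ∑ i ∈ s, c i * fmul (p i) w j k := by
  rw [fmul]
  have e1 : ∀ a ∈ Finset.range (j + 1), ∀ b ∈ Finset.range (k + 1),
      f a b * w (j - a) (k - b) = ∑ i ∈ s, c i * (p i a b * w (j - a) (k - b)) := by
    intro a ha b hb
    rw [Finset.mem_range] at ha hb
    rw [hf a b (by omega) (by omega), Finset.sum_mul]
    exact Finset.sum_congr rfl fun i _ => by ring
  calc ∑ a ∈ Finset.range (j + 1), ∑ b ∈ Finset.range (k + 1), f a b * w (j - a) (k - b)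
      = ∑ a ∈ Finset.range (j + 1), ∑ b ∈ Finset.range (k + 1),
          ∑ i ∈ s, c i * (p i a b * w (j - a) (k - b)) := by
        refine Finset.sum_congr rfl fun a ha => Finset.sum_congr rfl fun b hb => e1 a ha b hb
    _ = ∑ i ∈ s, ∑ a ∈ Finset.range (j + 1), ∑ b ∈ Finset.range (k + 1),
          c i * (p i a b * w (j - a) (k - b)) := by
        rw [show (∑ a ∈ Finset.range (j + 1), ∑ b ∈ Finset.range (k + 1),
          ∑ i ∈ s, c i * (p i a b * w (j - a) (k - b)))
          = ∑ a ∈ Finset.range (j + 1), ∑ i ∈ s, ∑ b ∈ Finset.range (k + 1),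
            c i * (p i a b * w (j - a) (k - b)) from
          Finset.sum_congr rfl fun a _ => Finset.sum_comm]
        exact Finset.sum_comm
    _ = ∑ i ∈ s, c i * fmul (p i) w j k := by
        refine Finset.sum_congr rfl fun i _ => ?_
        rw [fmul, Finset.mul_sum]
        refine Finset.sum_congr rfl fun a _ => ?_
        rw [Finset.mul_sum]

lemma d1_subst2 (F : FPS) {u v : FPS} (hu : u 0 0 = 0) (hv : v 0 0 = 0) :
    d1 (subst2 F u v) = fmul (subst2 (d1 F) u v) (d1 u) + fmul (subst2 (d2 F) u v) (d1 v) := by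
  funext j k
  have hzero : ∀ m n : ℕ, j + k < m + n → fmul (fpow u m) (fpow v n) j k = 0 :=
    fun m n h => ordGE_fmul (ordGE_fpow hu m) (ordGE_fpow hv n) j k (by omega)
  have hzero' : ∀ (m n : ℕ) (w : FPS), j + k < m + n →
      fmul (fmul (fpow u m) (fpow v n)) w j k = 0 := by
    intro m n w h
    exact ordGE_fmul_left (ordGE_fmul (ordGE_fpow hu m) (ordGE_fpow hv n)) w j k (by omega)
  -- LHS expansion
  have lhs1 : d1 (subst2 F u v) j k
      = ∑ m ∈ Finset.range (j + k + 2), ∑ n ∈ Finset.range (j + k + 2),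
          F m n * (d1 (fmul (fpow u m) (fpow v n)) j k) := by
    show ((j + 1 : ℕ) : ℂ) * subst2 F u v (j + 1) k = _
    rw [subst2_stab F hu hv (j + 1) k (j + k + 2) (by omega), Finset.mul_sum]
    refine Finset.sum_congr rfl fun m _ => ?_
    rw [Finset.mul_sum]
    refine Finset.sum_congr rfl fun n _ => ?_
    show _ = F m n * (((j + 1 : ℕ) : ℂ) * fmul (fpow u m) (fpow v n) (j + 1) k)
    ring
  have lhs2 : d1 (subst2 F u v) j k
      = (∑ m ∈ Finset.range (j + k + 2), ∑ n ∈ Finset.range (j + k + 2),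
          F m n * (fmul (d1 (fpow u m)) (fpow v n) j k))
        + ∑ m ∈ Finset.range (j + k + 2), ∑ n ∈ Finset.range (j + k + 2),
          F m n * (fmul (fpow u m) (d1 (fpow v n)) j k) := by
    rw [lhs1, ← Finset.sum_add_distrib]
    refine Finset.sum_congr rfl fun m _ => ?_
    rw [← Finset.sum_add_distrib]
    refine Finset.sum_congr rfl fun n _ => ?_
    rw [d1_fmul]
    show F m n * (fmul (d1 (fpow u m)) (fpow v n) j k + fmul (fpow u m) (d1 (fpow v n)) j k) = _
    ring
  -- first sum equals first RHS term
  have part1 : (∑ m ∈ Finset.range (j + k + 2), ∑ n ∈ Finset.range (j + k + 2),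
        F m n * (fmul (d1 (fpow u m)) (fpow v n) j k))
      = fmul (subst2 (d1 F) u v) (d1 u) j k := by
    have hf : ∀ a b, a ≤ j → b ≤ k → subst2 (d1 F) u v a b
        = ∑ i ∈ Finset.range (j + k + 2) ×ˢ Finset.range (j + k + 2),
            (d1 F) i.1 i.2 * fmul (fpow u i.1) (fpow v i.2) a b := by
      intro a b ha hb
      rw [Finset.sum_product]
      exact subst2_stab (d1 F) hu hv a b (j + k + 2) (by omega)
    rw [fmul_sum_left (d1 u) hf, Finset.sum_product]
    -- RHS now: ∑ m ∈ range (j+k+2), ∑ n, (d1 F) m n * fmul (fmul (fpow u m) (fpow v n)) (d1 u) j k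
    -- peel top term on the right, bottom term on the left
    rw [Finset.sum_range_succ
      (fun m => ∑ n ∈ Finset.range (j + k + 2),
        (d1 F) m n * fmul (fmul (fpow u m) (fpow v n)) (d1 u) j k) (j + k + 1)]
    rw [Finset.sum_eq_zero (fun n _ =>
      by rw [hzero' (j + k + 1) n (d1 u) (by omega), mul_zero] :
      ∀ n ∈ Finset.range (j + k + 2),
        (d1 F) (j + k + 1) n * fmul (fmul (fpow u (j + k + 1)) (fpow v n)) (d1 u) j k = 0)]
    rw [add_zero]
    rw [Finset.sum_range_succ'
      (fun m => ∑ n ∈ Finset.range (j + k + 2),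
        F m n * (fmul (d1 (fpow u m)) (fpow v n) j k)) (j + k + 1)]
    rw [Finset.sum_eq_zero (fun n _ => by
      show F 0 n * (fmul (d1 (fpow u 0)) (fpow v n) j k) = 0
      have : d1 (fpow u 0) = 0 := d1_oneF
      rw [this, zero_fmul]
      show F 0 n * (0 : FPS) j k = 0
      simp :
      ∀ n ∈ Finset.range (j + k + 2),
        F 0 n * (fmul (d1 (fpow u 0)) (fpow v n) j k) = 0)]
    rw [add_zero]
    refine Finset.sum_congr rfl fun m _ => Finset.sum_congr rfl fun n _ => ?_
    rw [d1_fpow, smul_fmul, fmul_right_comm]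
    show F (m + 1) n * (((m + 1 : ℕ) : ℂ) * fmul (fmul (fpow u m) (fpow v n)) (d1 u) j k) = _
    show _ = ((m + 1 : ℕ) : ℂ) * F (m + 1) n * fmul (fmul (fpow u m) (fpow v n)) (d1 u) j k
    ring
  -- second sum equals second RHS term
  have part2 : (∑ m ∈ Finset.range (j + k + 2), ∑ n ∈ Finset.range (j + k + 2),
        F m n * (fmul (fpow u m) (d1 (fpow v n)) j k))
      = fmul (subst2 (d2 F) u v) (d1 v) j k := by
    have hf : ∀ a b, a ≤ j → b ≤ k → subst2 (d2 F) u v a b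
        = ∑ i ∈ Finset.range (j + k + 2) ×ˢ Finset.range (j + k + 2),
            (d2 F) i.1 i.2 * fmul (fpow u i.1) (fpow v i.2) a b := by
      intro a b ha hb
      rw [Finset.sum_product]
      exact subst2_stab (d2 F) hu hv a b (j + k + 2) (by omega)
    rw [fmul_sum_left (d1 v) hf, Finset.sum_product]
    have rhs_inner : ∀ m ∈ Finset.range (j + k + 2),
        (∑ n ∈ Finset.range (j + k + 2),
          (d2 F) m n * fmul (fmul (fpow u m) (fpow v n)) (d1 v) j k)
        = ∑ n ∈ Finset.range (j + k + 1),
            (d2 F) m n * fmul (fmul (fpow u m) (fpow v n)) (d1 v) j k := by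
      intro m _
      rw [Finset.sum_range_succ]
      rw [hzero' m (j + k + 1) (d1 v) (by omega), mul_zero, add_zero]
    have lhs_inner : ∀ m ∈ Finset.range (j + k + 2),
        (∑ n ∈ Finset.range (j + k + 2), F m n * (fmul (fpow u m) (d1 (fpow v n)) j k))
        = ∑ n ∈ Finset.range (j + k + 1),
            F m (n + 1) * (fmul (fpow u m) (d1 (fpow v (n + 1))) j k) := by
      intro m _
      rw [Finset.sum_range_succ'
        (fun n => F m n * (fmul (fpow u m) (d1 (fpow v n)) j k)) (j + k + 1)]
      have : d1 (fpow v 0) = 0 := d1_oneF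
      rw [this, fmul_zero]
      show _ + F m 0 * (0 : FPS) j k = _
      simp
    rw [Finset.sum_congr rfl rhs_inner, Finset.sum_congr rfl lhs_inner]
    refine Finset.sum_congr rfl fun m _ => Finset.sum_congr rfl fun n _ => ?_
    rw [d1_fpow, fmul_smul, ← fmul_assoc]
    show F m (n + 1) * (((n + 1 : ℕ) : ℂ) * fmul (fmul (fpow u m) (fpow v n)) (d1 v) j k) = _
    show _ = ((n + 1 : ℕ) : ℂ) * F m (n + 1) * fmul (fmul (fpow u m) (fpow v n)) (d1 v) j k
    ring
  show d1 (subst2 F u v) j k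
      = fmul (subst2 (d1 F) u v) (d1 u) j k + fmul (subst2 (d2 F) u v) (d1 v) j k
  rw [lhs2, part1, part2]

section MinusLemmas
variable {l : ℂ}

lemma minus_fmul (hl0 : l ≠ 0) (f g : FPS) : minus l (fmul f g) = fmul (minus l f) (minus l g) := by
  funext j k
  simp only [minus, fmul, Finset.mul_sum]
  refine Finset.sum_congr rfl fun a ha => Finset.sum_congr rfl fun b hb => ?_
  rw [Finset.mem_range] at ha hb
  have ea : ((j - a : ℕ) : ℤ) = (j : ℤ) - a := by omega
  have eb : ((k - b : ℕ) : ℤ) = (k : ℤ) - b := by omega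
  rw [ea, eb]
  have e : (k : ℤ) - j = ((b : ℤ) - a) + (((k : ℤ) - b) - ((j : ℤ) - a)) := by ring
  rw [e, zpow_add₀ hl0]
  ring

lemma minus_oneF : minus l oneF = oneF := by
  funext j k
  by_cases h : j = 0 ∧ k = 0
  · rw [h.1, h.2]
    simp [minus, oneF]
  · simp [minus, oneF, h]

lemma minus_fpow (hl0 : l ≠ 0) (u : FPS) (m : ℕ) : minus l (fpow u m) = fpow (minus l u) m := by
  induction m with
  | zero => exact minus_oneF
  | succ m ih =>
      show minus l (fmul u (fpow u m)) = fmul (minus l u) (fpow (minus l u) m)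
      rw [minus_fmul hl0, ih]

lemma minus_subst2 (hl0 : l ≠ 0) (F u v : FPS) :
    minus l (subst2 F u v) = subst2 F (minus l u) (minus l v) := by
  funext j k
  simp only [minus, subst2, Finset.mul_sum]
  refine Finset.sum_congr rfl fun m _ => Finset.sum_congr rfl fun n _ => ?_
  have e : fmul (fpow (minus l u) m) (fpow (minus l v) n) j k
      = l ^ ((k : ℤ) - (j : ℤ)) * fmul (fpow u m) (fpow v n) j k := by
    rw [← minus_fpow hl0, ← minus_fpow hl0, ← minus_fmul hl0]
    rfl
  rw [e]
  ring

lemma minus_plus (hl0 : l ≠ 0) (f : FPS) : minus l (plus l f) = f := by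
  funext j k
  show l ^ ((k : ℤ) - j) * (l ^ ((j : ℤ) - k) * f j k) = f j k
  rw [← mul_assoc, ← zpow_add₀ hl0]
  norm_num

lemma d1_minus (hl0 : l ≠ 0) (f : FPS) : d1 (minus l f) = l⁻¹ • minus l (d1 f) := by
  funext j k
  show ((j + 1 : ℕ) : ℂ) * (l ^ ((k : ℤ) - ((j + 1 : ℕ) : ℤ)) * f (j + 1) k)
      = l⁻¹ * (l ^ ((k : ℤ) - j) * (((j + 1 : ℕ) : ℂ) * f (j + 1) k))
  have e : (k : ℤ) - ((j + 1 : ℕ) : ℤ) = (-1) + ((k : ℤ) - j) := by push_cast; ring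
  rw [e, zpow_add₀ hl0, zpow_neg_one]
  ring

end MinusLemmas

section DiagLemmas
variable {l : ℂ}

lemma zpow_ne_one (hl0 : l ≠ 0) (hru : ∀ n : ℕ, 0 < n → l ^ n ≠ 1) :
    ∀ m : ℤ, m ≠ 0 → l ^ m ≠ 1 := by
  intro m hm
  rcases m with n | n
  · rw [Int.ofNat_eq_coe, zpow_natCast]
    refine hru n (Nat.pos_of_ne_zero fun h => hm ?_)
    rw [h]
    rfl
  · rw [zpow_negSucc]
    intro h
    exact hru (n + 1) (by omega) (by rwa [inv_eq_one] at h)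

lemma nab_Emin (hl0 : l ≠ 0) (hru : ∀ n : ℕ, 0 < n → l ^ n ≠ 1) (g : FPS) :
    nab l (Emin l g) = g - Pim g := by
  funext j k
  simp only [nab, Pi.sub_apply, Pi.smul_apply, smul_eq_mul, minus, Emin, Pim]
  by_cases hjk : j = k + 1
  · simp [hjk]
  · rw [if_neg hjk, if_neg hjk]
    have hD : l ^ ((k : ℤ) - j) - l⁻¹ ≠ 0 := by
      intro h
      have h1 : l ^ ((k : ℤ) - j) = l⁻¹ := sub_eq_zero.mp h
      have h2 : l ^ ((k : ℤ) - j + 1) = 1 := by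
        rw [zpow_add₀ hl0, zpow_one, h1, inv_mul_cancel₀ hl0]
      exact zpow_ne_one hl0 hru _ (by omega) h2
    rw [sub_zero]
    have e : l ^ ((k : ℤ) - (j : ℤ)) * (g j k / (l ^ ((k : ℤ) - (j : ℤ)) - l⁻¹))
        - l⁻¹ * (g j k / (l ^ ((k : ℤ) - (j : ℤ)) - l⁻¹))
        = g j k / (l ^ ((k : ℤ) - (j : ℤ)) - l⁻¹) * (l ^ ((k : ℤ) - (j : ℤ)) - l⁻¹) := by
      ring
    rw [e, div_mul_cancel₀ _ hD]

lemma nabPlus_Eplus (hl0 : l ≠ 0) (hru : ∀ n : ℕ, 0 < n → l ^ n ≠ 1) (g : FPS) :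
    nabPlus l (Eplus l g) = g - Pip g := by
  funext j k
  simp only [nabPlus, Pi.sub_apply, Pi.smul_apply, smul_eq_mul, plus, Eplus, Pip]
  by_cases hjk : k = j + 1
  · simp [hjk]
  · rw [if_neg hjk, if_neg hjk]
    have hD : 1 - l ^ ((j : ℤ) - k + 1) ≠ 0 := by
      intro h
      have h1 : l ^ ((j : ℤ) - k + 1) = 1 := by
        have := sub_eq_zero.mp h
        exact this.symm
      exact zpow_ne_one hl0 hru _ (by omega) h1
    rw [sub_zero]
    have e2 : l * (l ^ ((j : ℤ) - k) * (g j k / (1 - l ^ ((j : ℤ) - k + 1))))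
        = l ^ ((j : ℤ) - k + 1) * (g j k / (1 - l ^ ((j : ℤ) - k + 1))) := by
      rw [zpow_add₀ hl0, zpow_one]
      ring
    rw [e2]
    have e : g j k / (1 - l ^ ((j : ℤ) - k + 1))
        - l ^ ((j : ℤ) - k + 1) * (g j k / (1 - l ^ ((j : ℤ) - k + 1)))
        = g j k / (1 - l ^ ((j : ℤ) - k + 1)) * (1 - l ^ ((j : ℤ) - k + 1)) := by
      ring
    rw [e, div_mul_cancel₀ _ hD]

lemma Pim_Pim (f : FPS) : Pim (Pim f) = Pim f := by
  funext j k
  simp only [Pim]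
  by_cases h : j = k + 1
  · simp [h]
  · simp [h]

lemma Pim_sub_Pim (f : FPS) : Pim (f - Pim f) = 0 := by
  funext j k
  simp only [Pim, Pi.sub_apply, Pi.zero_apply]
  by_cases h : j = k + 1
  · simp [h]
  · simp [h]

lemma Pip_sub_Pip (f : FPS) : Pip (f - Pip f) = 0 := by
  funext j k
  simp only [Pip, Pi.sub_apply, Pi.zero_apply]
  by_cases h : k = j + 1
  · simp [h]
  · simp [h]

lemma Pip_add (f g : FPS) : Pip (f + g) = Pip f + Pip g := by
  funext j k
  simp only [Pip, Pi.add_apply]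
  by_cases h : k = j + 1
  · simp [h]
  · simp [h]

lemma nabPlus_sub (f g : FPS) : nabPlus l (f - g) = nabPlus l f - nabPlus l g := by
  funext j k
  simp only [nabPlus, plus, Pi.sub_apply, Pi.smul_apply, smul_eq_mul]
  ring

lemma nabPlus_neg (f : FPS) : nabPlus l (-f) = -nabPlus l f := by
  funext j k
  simp only [nabPlus, plus, Pi.sub_apply, Pi.neg_apply, Pi.smul_apply, smul_eq_mul]
  ring

lemma Pip_smul_minus (hl0 : l ≠ 0) (f : FPS) : Pip (l⁻¹ • minus l f) = Pip f := by
  funext j k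
  by_cases h : k = j + 1
  · subst h
    simp only [Pip, if_pos rfl, Pi.smul_apply, smul_eq_mul, minus]
    have e : ((j + 1 : ℕ) : ℤ) - (j : ℤ) = 1 := by push_cast; ring
    rw [e, zpow_one, ← mul_assoc, inv_mul_cancel₀ hl0, one_mul]
  · simp [Pip, h]

end DiagLemmas

lemma fmul_00 (f g : FPS) : fmul f g 0 0 = f 0 0 * g 0 0 := by
  simp [fmul]

lemma subst2_00 (F u v : FPS) : subst2 F u v 0 0 = F 0 0 := by
  simp [subst2, fpow, fmul, oneF]

lemma Sq11 (qs : OPS) (hq0 : qs 0 = 1) : Sq qs 1 1 = (1 + 2 * qs 2) / 4 := by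
  simp only [Sq, fmul, substOne, halfSum, halfDiff, cosSeries, fpow, oneF,
    Finset.sum_range_succ, Finset.sum_range_zero, hq0]
  norm_num [Nat.factorial]
  simp [fpow, oneF]
  ring

lemma hFun00 (l : ℂ) (qs : OPS) (hq0 : qs 0 = 1) (φ : FPS) (hφ10 : φ 1 0 = 1) :
    hFun l qs φ 0 0 = (1 + 2 * qs 2) / 4 := by
  rw [hFun, fmul_00, fmul_00, subst2_00]
  have e1 : d1 (d2 (Sq qs)) 0 0 = Sq qs 1 1 := by simp [d1, d2]
  have e2 : d1 φ 0 0 = 1 := by simp [d1, hφ10]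
  have e3 : minus l (d1 φ) 0 0 = 1 := by simp [minus, d1, hφ10]
  rw [e1, e2, e3, Sq11 qs hq0]
  ring

lemma PipF_eq {l : ℂ} (hl0 : l ≠ 0) (qs : OPS) (φ : FPS) (hφ0 : φ 0 0 = 0) :
    Pip (fmul (Err l qs φ) (d1 φ)) = Pip (d1 (subst2 (Sq qs) (minus l φ) φ)) := by
  have hu : minus l φ 0 0 = 0 := by simp [minus, hφ0]
  rw [d1_subst2 (Sq qs) hu hφ0, d1_minus hl0, fmul_smul, Err, add_fmul, Pip_add, Pip_add]
  have e : fmul (subst2 (d1 (Sq qs)) (minus l φ) φ) (minus l (d1 φ))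
      = minus l (fmul (subst2 (d1 (Sq qs)) φ (plus l φ)) (d1 φ)) := by
    rw [minus_fmul hl0, minus_subst2 hl0, minus_plus hl0]
  rw [e, Pip_smul_minus hl0]
  abel

/-- With `w = φ_z·E(ψ/h − Π(ψ/h))`:
`∇⁺(h·∇(w/φ_z)) + ℰ(q*,φ)·φ_z = [z·∂_z(S_{q*}(φ⁻,φ))]/z − ∇⁺(h·Π(ψ/h))`. -/
theorem approximate_inner_solution
    (l : ℂ) (hl : ‖l‖ = 1) (hru : ∀ n : ℕ, 0 < n → l ^ n ≠ 1)
    (hl2 : l ^ 2 ≠ 1)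
    (qs : OPS) (hq0 : qs 0 = 1) (hs0 : (1 + 2 * qs 2) / 4 ≠ (0 : ℂ))
    (φ : FPS) (hφ : normalized φ) (hsym : swapI φ = φ) :
    nabPlus l (fmul (hFun l qs φ) (nab l (fdiv (wFun l qs φ) (d1 φ))))
        + fmul (Err l qs φ) (d1 φ) =
      Pip (d1 (subst2 (Sq qs) (minus l φ) φ))
        - nabPlus l (fmul (hFun l qs φ) (Pim (fdiv (psiFun l qs φ) (hFun l qs φ)))) := by
  obtain ⟨hφ0, hφ10, -, -, -, -⟩ := hφ
  have hl0 : l ≠ 0 := by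
    intro h
    rw [h] at hl
    simp at hl
  have hd1φ0 : d1 φ 0 0 ≠ 0 := by
    have : d1 φ 0 0 = 1 := by simp [d1, hφ10]
    rw [this]
    exact one_ne_zero
  have hh0 : hFun l qs φ 0 0 ≠ 0 := by
    rw [hFun00 l qs hq0 φ hφ10]
    exact hs0
  have step1 : fdiv (wFun l qs φ) (d1 φ)
      = Emin l (fdiv (psiFun l qs φ) (hFun l qs φ)
          - Pim (fdiv (psiFun l qs φ) (hFun l qs φ))) := by
    rw [wFun]
    exact fdiv_fmul_cancel hd1φ0 _
  have step2 : nab l (fdiv (wFun l qs φ) (d1 φ))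
      = fdiv (psiFun l qs φ) (hFun l qs φ)
          - Pim (fdiv (psiFun l qs φ) (hFun l qs φ)) := by
    rw [step1, nab_Emin hl0 hru, Pim_sub_Pim, sub_zero]
  have step3 : fmul (hFun l qs φ) (nab l (fdiv (wFun l qs φ) (d1 φ)))
      = psiFun l qs φ
        - fmul (hFun l qs φ) (Pim (fdiv (psiFun l qs φ) (hFun l qs φ))) := by
    rw [step2, fmul_sub, fmul_fdiv_cancel hh0]
  have step5 : nabPlus l (psiFun l qs φ)
      = Pip (fmul (Err l qs φ) (d1 φ)) - fmul (Err l qs φ) (d1 φ) := by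
    rw [psiFun, nabPlus_neg, nabPlus_Eplus hl0 hru, Pip_sub_Pip, sub_zero, neg_sub]
  rw [step3, nabPlus_sub, step5, PipF_eq hl0 qs φ hφ0]
  abel


end Treschev

end
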